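/- Let W be a standard one-dimensional Brownian motion and let f : [0,∞) × ℝ → ℝ be a measurable, strictly positive function such that for all 0 ≤ s ≤ t, almost surely f(s, W_s) · f(t − s, W_t − W_s) = f(t, W_t). Then for every t ≥ 0 and every p ∈ ℝ, the random variable f(t, W_t)^p has finite expectation: E[f(t, W_t)^p] < ∞. -/

import Mathlib

open MeasureTheory ProbabilityTheory Real
open scoped NNReal ENNReal

noncomputable section

namespace Stmt9Aux

open Filter

local notation "vol" => (volume : Measure ℝ)
local notation "vol2" => (Measure.prod (volume : Measure ℝ) (volume : Measure ℝ))

lemma pick_bound {h : ℝ → ℝ}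
    (hXA : ∀ᵐ x ∂vol, ∀ᵐ a ∂vol, h x = h a + h (x - a))
    {c₁ c₂ : ℝ} {S₁ S₂ : Set ℝ}
    (h1 : ∀ᵐ a ∂vol, a ∈ S₁ → |h a| ≤ c₁)
    (h2 : ∀ᵐ b ∂vol, b ∈ S₂ → |h b| ≤ c₂) :
    ∀ᵐ x ∂vol, (vol {a | a ∈ S₁ ∧ x - a ∈ S₂} ≠ 0 → |h x| ≤ c₁ + c₂) := by
  filter_upwards [hXA] with x hx hpos
  have h2' : ∀ᵐ a ∂vol, x - a ∈ S₂ → |h (x - a)| ≤ c₂ :=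
    (Measure.measurePreserving_sub_left vol x).quasiMeasurePreserving.tendsto_ae.eventually h2
  have hfreq : ∃ᶠ a in ae vol, a ∈ {a | a ∈ S₁ ∧ x - a ∈ S₂} :=
    frequently_ae_mem_iff.2 hpos
  obtain ⟨a, ⟨haS, hxaS⟩, heq, hb1, hb2⟩ :=
    (hfreq.and_eventually (hx.and (h1.and h2'))).exists
  calc |h x| = |h a + h (x - a)| := by rw [heq]
  _ ≤ |h a| + |h (x - a)| := abs_add_le _ _
  _ ≤ c₁ + c₂ := add_le_add (hb1 haS) (hb2 hxaS)

lemma growth {h : ℝ → ℝ} (hm : Measurable h)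
    (hadd : ∀ᵐ z : ℝ × ℝ ∂vol2, h (z.1 + z.2) = h z.1 + h z.2) :
    ∃ C : ℝ, 0 ≤ C ∧ ∀ᵐ x ∂vol, |h x| ≤ C * (1 + |x|) := by
  -- a.e. decomposition identities
  have hXA : ∀ᵐ x ∂vol, ∀ᵐ a ∂vol, h x = h a + h (x - a) := by
    have h1 := (measurePreserving_prod_sub_swap vol vol).quasiMeasurePreserving.tendsto_ae.eventually hadd
    have h2 : ∀ᵐ z : ℝ × ℝ ∂vol2, h z.1 = h z.2 + h (z.1 - z.2) := by
      filter_upwards [h1] with z hz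
      have e : z.2 + (z.1 - z.2) = z.1 := by ring
      rw [e] at hz
      exact hz
    exact Measure.ae_ae_of_ae_prod h2
  have hBA : ∀ᵐ x ∂vol, ∀ᵐ a ∂vol, h x = h (a + x) - h a := by
    have h1 := Measure.measurePreserving_swap.quasiMeasurePreserving.tendsto_ae.eventually hadd
    have h2 : ∀ᵐ z : ℝ × ℝ ∂vol2, h z.1 = h (z.2 + z.1) - h z.2 := by
      filter_upwards [h1] with z hz
      simp only [Prod.fst_swap, Prod.snd_swap] at hz
      linarith
    exact Measure.ae_ae_of_ae_prod h2
  -- choose the bound M on most of (0,1)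
  obtain ⟨M, hM0, hMsmall⟩ : ∃ M : ℝ, 0 ≤ M ∧
      vol (Set.Ioo (0:ℝ) 1 ∩ {x | M < |h x|}) < ENNReal.ofReal (1/100) := by
    set D : ℕ → Set ℝ := fun n => Set.Ioo (0:ℝ) 1 ∩ {x | (n:ℝ) < |h x|} with hD
    have hmeasD : ∀ n, MeasurableSet (D n) := fun n =>
      measurableSet_Ioo.inter (measurableSet_lt measurable_const hm.abs)
    have hanti : Antitone D := by
      intro n m hnm x hx
      refine ⟨hx.1, ?_⟩
      have h2 : (m:ℝ) < |h x| := hx.2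
      have h1 : (n:ℝ) ≤ (m:ℝ) := by exact_mod_cast hnm
      exact lt_of_le_of_lt h1 h2
    have hempty : ⋂ n, D n = ∅ := by
      ext x
      simp only [Set.mem_iInter, Set.mem_empty_iff_false, iff_false, not_forall]
      obtain ⟨n, hn⟩ := exists_nat_gt (|h x|)
      exact ⟨n, fun hx => absurd hx.2 (not_lt.2 hn.le)⟩
    have hfin : vol (D 0) ≠ ∞ := by
      refine ne_of_lt (lt_of_le_of_lt (measure_mono (Set.inter_subset_left)) ?_)
      rw [Real.volume_Ioo]
      exact ENNReal.ofReal_lt_top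
    have htends := tendsto_measure_iInter_atTop
      (fun n => (hmeasD n).nullMeasurableSet) hanti ⟨0, hfin⟩
    rw [hempty] at htends
    simp only [measure_empty] at htends
    have hlt : ∀ᶠ n in atTop, vol (D n) < ENNReal.ofReal (1/100) :=
      htends.eventually_lt_const (by simp)
    obtain ⟨n, hn⟩ := hlt.exists
    exact ⟨n, Nat.cast_nonneg n, hn⟩
  set Bad := Set.Ioo (0:ℝ) 1 ∩ {x | M < |h x|} with hBadDef
  have hBadMeas : MeasurableSet Bad :=
    measurableSet_Ioo.inter (measurableSet_lt measurable_const hm.abs)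
  set G := Set.Ioo (0:ℝ) 1 ∩ {x | |h x| ≤ M} with hGDef
  -- base case
  have base : ∀ᵐ x ∂vol, x ∈ Set.Ioo (1/8 : ℝ) (7/4) → |h x| ≤ M + M := by
    have hp := pick_bound hXA (c₁ := M) (c₂ := M) (S₁ := G) (S₂ := G)
      (Eventually.of_forall fun a ha => ha.2) (Eventually.of_forall fun a ha => ha.2)
    filter_upwards [hp] with x hx hmem
    refine hx ?_
    intro h0
    set J := Set.Ioo (max 0 (x-1)) (min 1 x) with hJdef
    have hsub : J ⊆ ({a | a ∈ G ∧ x - a ∈ G} ∪ Bad) ∪ ((fun a => x - a) ⁻¹' Bad) := by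
      intro a ha
      obtain ⟨ha1, ha2⟩ := ha
      have haI : a ∈ Set.Ioo (0:ℝ) 1 :=
        ⟨lt_of_le_of_lt (le_max_left _ _) ha1, lt_of_lt_of_le ha2 (min_le_left _ _)⟩
      have hxaI : x - a ∈ Set.Ioo (0:ℝ) 1 := by
        constructor
        · have := lt_of_lt_of_le ha2 (min_le_right _ _); linarith
        · have := lt_of_le_of_lt (le_max_right _ _) ha1; linarith
      by_cases hb1 : a ∈ Bad
      · exact Or.inl (Or.inr hb1)
      by_cases hb2 : x - a ∈ Bad
      · exact Or.inr hb2
      · refine Or.inl (Or.inl ⟨⟨haI, ?_⟩, ⟨hxaI, ?_⟩⟩)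
        · exact not_lt.1 (fun hlt : M < |h a| => hb1 ⟨haI, hlt⟩)
        · exact not_lt.1 (fun hlt : M < |h (x - a)| => hb2 ⟨hxaI, hlt⟩)
    have hpre : vol ((fun a => x - a) ⁻¹' Bad) = vol Bad :=
      (Measure.measurePreserving_sub_left vol x).measure_preimage
        hBadMeas.nullMeasurableSet
    have hlen : (1/8 : ℝ) ≤ min 1 x - max 0 (x - 1) := by
      obtain ⟨hx1, hx2⟩ := hmem
      rw [min_def, max_def]
      split_ifs <;> linarith
    have hJvol : ENNReal.ofReal (1/8) ≤ vol J := by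
      rw [hJdef, Real.volume_Ioo]
      exact ENNReal.ofReal_le_ofReal hlen
    have hchain : vol J ≤ ENNReal.ofReal (1/100) + ENNReal.ofReal (1/100) := by
      refine le_trans (measure_mono hsub) ?_
      refine le_trans (measure_union_le _ _) ?_
      have h1 : vol ({a | a ∈ G ∧ x - a ∈ G} ∪ Bad) ≤ ENNReal.ofReal (1/100) := by
        refine le_trans (measure_union_le _ _) ?_
        rw [h0, zero_add]
        exact hMsmall.le
      exact add_le_add h1 (by rw [hpre]; exact hMsmall.le)
    rw [← ENNReal.ofReal_add (by norm_num) (by norm_num)] at hchain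
    have := le_trans hJvol hchain
    rw [ENNReal.ofReal_le_ofReal_iff (by norm_num)] at this
    norm_num at this
  -- inductive step
  have step : ∀ (l r c : ℝ), l < r →
      (∀ᵐ x ∂vol, x ∈ Set.Ioo l r → |h x| ≤ c) →
      (∀ᵐ x ∂vol, x ∈ Set.Ioo (2*l) (2*r) → |h x| ≤ c + c) := by
    intro l r c hlr hbound
    have hp := pick_bound hXA hbound hbound
    filter_upwards [hp] with x hx hmem
    refine hx ?_
    intro h0
    have hsub : Set.Ioo (max l (x - r)) (min r (x - l)) ⊆
        {a | a ∈ Set.Ioo l r ∧ x - a ∈ Set.Ioo l r} := by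
      intro a ha
      obtain ⟨ha1, ha2⟩ := ha
      refine ⟨⟨lt_of_le_of_lt (le_max_left _ _) ha1, lt_of_lt_of_le ha2 (min_le_left _ _)⟩, ?_, ?_⟩
      · have := lt_of_lt_of_le ha2 (min_le_right _ _); linarith
      · have := lt_of_le_of_lt (le_max_right _ _) ha1; linarith
    have hpos : 0 < vol (Set.Ioo (max l (x-r)) (min r (x-l))) := by
      rw [Real.volume_Ioo]
      refine ENNReal.ofReal_pos.2 ?_
      obtain ⟨h1, h2⟩ := hmem
      rw [max_def, min_def]
      split_ifs <;> linarith
    exact hpos.ne' (le_antisymm (le_trans (measure_mono hsub) h0.le) zero_le)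
  -- induction
  have main : ∀ k : ℕ, ∀ᵐ x ∂vol,
      x ∈ Set.Ioo ((2:ℝ)^k * (1/8)) ((2:ℝ)^k * (7/4)) → |h x| ≤ (2:ℝ)^k * (2*M) := by
    intro k
    induction k with
    | zero =>
      filter_upwards [base] with x hx hmem
      have : x ∈ Set.Ioo (1/8 : ℝ) (7/4) := by
        simpa using hmem
      have := hx this
      simp only [pow_zero, one_mul]
      linarith
    | succ k ih =>
      have hlr : (2:ℝ)^k * (1/8) < (2:ℝ)^k * (7/4) := by
        have := pow_pos (by norm_num : (0:ℝ) < 2) k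
        nlinarith
      have h2 := step _ _ _ hlr ih
      have e1 : (2:ℝ)^(k+1) * (1/8) = 2 * ((2:ℝ)^k * (1/8)) := by ring
      have e2 : (2:ℝ)^(k+1) * (7/4) = 2 * ((2:ℝ)^k * (7/4)) := by ring
      have e3 : (2:ℝ)^(k+1) * (2*M) = (2:ℝ)^k * (2*M) + (2:ℝ)^k * (2*M) := by ring
      rw [e1, e2, e3]
      exact h2
  -- linear bound on (1/4, ∞)
  have posB : ∀ᵐ x ∂vol, (1/4 < x → |h x| ≤ 8*M*x) := by
    have hall : ∀ᵐ x ∂vol, ∀ k : ℕ,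
        x ∈ Set.Ioo ((2:ℝ)^k * (1/8)) ((2:ℝ)^k * (7/4)) → |h x| ≤ (2:ℝ)^k * (2*M) :=
      ae_all_iff.2 main
    filter_upwards [hall] with x hx hgt
    obtain ⟨k, hk1, hk2⟩ : ∃ k : ℕ, (2:ℝ)^k ≤ 4*x ∧ 4*x < (2:ℝ)^(k+1) := by
      have hex : ∃ n : ℕ, 4*x < 2^n := pow_unbounded_of_one_lt _ one_lt_two
      have hn := Nat.find_spec hex
      have hn0 : Nat.find hex ≠ 0 := by
        intro hzero
        rw [hzero] at hn
        norm_num at hn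
        linarith
      refine ⟨Nat.find hex - 1, ?_, ?_⟩
      · have := Nat.find_min hex (Nat.pred_lt hn0)
        exact not_lt.1 this
      · rw [Nat.sub_add_cancel (Nat.one_le_iff_ne_zero.2 hn0)]
        exact hn
    have hpk := pow_pos (by norm_num : (0:ℝ) < 2) k
    have hmem : x ∈ Set.Ioo ((2:ℝ)^k * (1/8)) ((2:ℝ)^k * (7/4)) := by
      constructor
      · nlinarith
      · rw [pow_succ] at hk2; nlinarith
    have := hx k hmem
    nlinarith
  -- final bound
  refine ⟨24*M, by linarith, ?_⟩
  filter_upwards [hBA] with x hx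
  have hQ2 : ∀ᵐ a ∂vol, (1/4 < a + x → |h (a+x)| ≤ 8*M*(a+x)) :=
    (measurePreserving_add_right vol x).quasiMeasurePreserving.tendsto_ae.eventually posB
  have hfreq : ∃ᶠ a in ae vol, a ∈ Set.Ioo (|x| + 1/2) (|x| + 1) := by
    refine frequently_ae_mem_iff.2 ?_
    rw [Real.volume_Ioo]
    simp only [ne_eq, ENNReal.ofReal_eq_zero, not_le]
    linarith
  obtain ⟨a, haI, heq, hb1, hb2⟩ := (hfreq.and_eventually (hx.and (posB.and hQ2))).exists
  have habs0 := abs_nonneg x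
  have ha1 : 1/4 < a := by obtain ⟨h1, h2⟩ := haI; linarith
  have ha2 : 1/4 < a + x := by
    have := neg_abs_le x
    obtain ⟨h1, h2⟩ := haI
    linarith
  have hba := hb1 ha1
  have hbax := hb2 ha2
  have habs : |h x| ≤ |h (a+x)| + |h a| := by
    rw [heq]
    exact abs_sub _ _
  have hxa := le_abs_self x
  obtain ⟨hI1, hI2⟩ := haI
  nlinarith [mul_nonneg hM0 habs0]


/-- From the a.e. splitting identity `gh x + gh y = g (x+y)`, deduce an a.e. linear
growth bound for `g`. -/
lemma linear_growth_of_split {g gh : ℝ → ℝ} (hg : Measurable g)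
    (heq : ∀ᵐ z : ℝ × ℝ ∂vol2, gh z.1 + gh z.2 = g (z.1 + z.2)) :
    ∃ C : ℝ, 0 ≤ C ∧ ∀ᵐ x ∂vol, |g x| ≤ C * (1 + |x|) := by
  have hswap : ∀ᵐ y ∂vol, ∀ᵐ x ∂vol, gh x + gh y = g (x + y) := by
    have h1 := Measure.measurePreserving_swap.quasiMeasurePreserving.tendsto_ae.eventually heq
    have h2 : ∀ᵐ z : ℝ × ℝ ∂vol2, gh z.2 + gh z.1 = g (z.2 + z.1) := by
      filter_upwards [h1] with z hz
      simpa using hz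
    exact Measure.ae_ae_of_ae_prod h2
  obtain ⟨y₀, hy₀⟩ := hswap.exists
  set c := gh y₀ with hc
  have A1 : ∀ᵐ x ∂vol, gh x = g (x + y₀) - c := by
    filter_upwards [hy₀] with x hx; linarith
  have L1 : ∀ᵐ z : ℝ × ℝ ∂vol2, gh z.1 = g (z.1 + y₀) - c :=
    Measure.quasiMeasurePreserving_fst.tendsto_ae.eventually A1
  have L2 : ∀ᵐ z : ℝ × ℝ ∂vol2, gh z.2 = g (z.2 + y₀) - c :=
    Measure.quasiMeasurePreserving_snd.tendsto_ae.eventually A1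
  have AE3 : ∀ᵐ z : ℝ × ℝ ∂vol2,
      g (z.1 + y₀) - c + (g (z.2 + y₀) - c) = g (z.1 + z.2) := by
    filter_upwards [heq, L1, L2] with z h1 h2 h3
    rw [h2, h3] at h1
    exact h1
  set h : ℝ → ℝ := fun w => g (w + 2*y₀) - 2*c with hH
  have hadd : ∀ᵐ z : ℝ × ℝ ∂vol2, h (z.1 + z.2) = h z.1 + h z.2 := by
    have hT : MeasurePreserving (fun z : ℝ × ℝ => (z.1 + y₀, z.2 + y₀)) vol2 vol2 :=
      (measurePreserving_add_right vol y₀).prod (measurePreserving_add_right vol y₀)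
    have h1 := hT.quasiMeasurePreserving.tendsto_ae.eventually AE3
    filter_upwards [h1] with z hz
    simp only [hH]
    have e1 : z.1 + y₀ + y₀ = z.1 + 2*y₀ := by ring
    have e2 : z.2 + y₀ + y₀ = z.2 + 2*y₀ := by ring
    have e3 : z.1 + y₀ + (z.2 + y₀) = z.1 + z.2 + 2*y₀ := by ring
    simp only [e1, e2, e3] at hz
    linarith
  have hmh : Measurable h := (hg.comp (measurable_add_const (2*y₀))).sub measurable_const
  obtain ⟨C, hC0, hCb⟩ := growth hmh hadd
  have htr : ∀ᵐ x ∂vol, |h (x + -(2*y₀))| ≤ C * (1 + |x + -(2*y₀)|) :=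
    (measurePreserving_add_right vol (-(2*y₀))).quasiMeasurePreserving.tendsto_ae.eventually hCb
  refine ⟨C*(1+2*|y₀|) + 2*|c|, by positivity, ?_⟩
  filter_upwards [htr] with x hx
  have hgx : h (x + -(2*y₀)) = g x - 2*c := by
    simp only [hH]
    rw [show x + -(2*y₀) + 2*y₀ = x by ring]
  rw [hgx] at hx
  have habs1 : |g x| ≤ |g x - 2*c| + 2*|c| := by
    have e : g x = (g x - 2*c) + 2*c := by ring
    calc |g x| = |(g x - 2*c) + 2*c| := by rw [← e]
    _ ≤ |g x - 2*c| + |2*c| := abs_add_le _ _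
    _ ≤ |g x - 2*c| + 2*|c| := by
        have : |2*c| = 2*|c| := by rw [abs_mul]; simp
        linarith
  have habs2 : |x + -(2*y₀)| ≤ |x| + 2*|y₀| := by
    calc |x + -(2*y₀)| ≤ |x| + |(-(2*y₀))| := abs_add_le _ _
    _ = |x| + 2*|y₀| := by rw [abs_neg, abs_mul]; simp
  have hstep : C * (1 + |x + -(2*y₀)|) ≤ C * (1 + (|x| + 2*|y₀|)) :=
    mul_le_mul_of_nonneg_left (by linarith) hC0
  nlinarith [abs_nonneg x, abs_nonneg y₀, abs_nonneg c,
    mul_nonneg (mul_nonneg hC0 (abs_nonneg y₀)) (abs_nonneg x),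
    mul_nonneg (abs_nonneg c) (abs_nonneg x)]


lemma integrable_exp_mul_abs_gaussianReal {v : ℝ≥0} (hv : v ≠ 0) (c : ℝ) :
    Integrable (fun x => rexp (c * (1 + |x|))) (gaussianReal 0 v) := by
  have hvpos : (0:ℝ) < (v:ℝ) := by
    have : 0 < v := pos_iff_ne_zero.mpr hv
    exact_mod_cast this
  rw [gaussianReal_of_var_ne_zero _ hv]
  rw [integrable_withDensity_iff (measurable_gaussianPDF 0 v)
    (Eventually.of_forall fun x => ENNReal.ofReal_lt_top)]
  have hsimp : (fun x => rexp (c * (1 + |x|)) * (gaussianPDF 0 v x).toReal)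
      = fun x => rexp (c * (1 + |x|)) * gaussianPDFReal 0 v x := by
    funext x
    rw [gaussianPDF, ENNReal.toReal_ofReal (gaussianPDFReal_nonneg 0 v x)]
  rw [hsimp]
  set K : ℝ := (√(2 * π * v))⁻¹ * rexp (c + c^2 * v) with hK
  have hintK : Integrable (fun x => K * rexp (-(1/(4*(v:ℝ))) * x^2)) volume := by
    refine Integrable.const_mul ?_ K
    refine integrable_exp_neg_mul_sq ?_
    positivity
  refine Integrable.mono' hintK ?_ ?_
  · refine Measurable.aestronglyMeasurable ?_
    have m1 : Measurable fun x : ℝ => c * (1 + |x|) :=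
      ((measurable_abs.const_add 1).const_mul c)
    exact (Real.measurable_exp.comp m1).mul (measurable_gaussianPDFReal 0 v)
  · refine Eventually.of_forall fun x => ?_
    have hnn : 0 ≤ rexp (c * (1 + |x|)) * gaussianPDFReal 0 v x :=
      mul_nonneg (Real.exp_pos _).le (gaussianPDFReal_nonneg 0 v x)
    rw [Real.norm_eq_abs, abs_of_nonneg hnn]
    have hpdf : gaussianPDFReal 0 v x = (√(2 * π * v))⁻¹ * rexp (-(x - 0)^2 / (2 * v)) := rfl
    rw [hpdf]
    have hkey : c * (1 + |x|) + -(x - 0)^2 / (2 * (v:ℝ)) ≤ (c + c^2 * v) + (-(1/(4*(v:ℝ))) * x^2) := by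
      have hsq : (c * |x| - c^2 * (v:ℝ)) * (4 * v) ≤ x^2 := by
        nlinarith [sq_nonneg (|x| - 2*c*(v:ℝ)), sq_abs x]
      have h4v : (0:ℝ) < 4 * v := by positivity
      rw [sub_zero]
      have hdiv : c * |x| - c^2 * (v:ℝ) ≤ x^2 / (4 * (v:ℝ)) := by
        rw [le_div_iff₀ h4v]
        exact hsq
      have e1 : -x^2 / (2 * (v:ℝ)) = -(x^2 / (2 * v)) := by ring
      have e2 : -(1/(4*(v:ℝ))) * x^2 = -(x^2 / (4 * v)) := by ring
      have e3 : x^2 / (2 * (v:ℝ)) = x^2 / (4 * v) + x^2 / (4 * v) := by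
        field_simp
        ring
      rw [e1, e2, e3]
      nlinarith [sq_nonneg x]
    calc rexp (c * (1 + |x|)) * ((√(2 * π * v))⁻¹ * rexp (-(x - 0)^2 / (2 * v)))
        = (√(2 * π * v))⁻¹ * rexp (c * (1 + |x|) + -(x - 0)^2 / (2 * v)) := by
          rw [mul_left_comm, ← Real.exp_add]
    _ ≤ (√(2 * π * v))⁻¹ * rexp ((c + c^2 * v) + (-(1/(4*(v:ℝ))) * x^2)) := by
          refine mul_le_mul_of_nonneg_left ?_ (by positivity)
          exact Real.exp_le_exp.2 hkey
    _ = K * rexp (-(1/(4*(v:ℝ))) * x^2) := by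
          rw [hK, Real.exp_add]
          ring


end Stmt9Aux

variable {Ω : Type*} [mΩ : MeasurableSpace Ω]

/-- The σ-algebra generated by the process `W` up to time `t`. -/
def natSigma (W : ℝ → Ω → ℝ) (t : ℝ) : MeasurableSpace Ω :=
  ⨆ s ∈ Set.Icc (0 : ℝ) t, MeasurableSpace.comap (W s) inferInstance

/-- `W` is a standard one-dimensional Brownian motion under `P`. -/
structure IsStandardBM (P : Measure Ω) (W : ℝ → Ω → ℝ) : Prop where
  isProb : IsProbabilityMeasure P
  init : ∀ ω, W 0 ω = 0
  cont : ∀ ω, Continuous fun t => W t ω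
  meas : ∀ t, Measurable (W t)
  gauss : ∀ s t : ℝ, 0 ≤ s → s ≤ t →
    P.map (fun ω => W t ω - W s ω) = gaussianReal 0 (Real.toNNReal (t - s))
  indep : ∀ s t : ℝ, 0 ≤ s → s ≤ t →
    Indep (MeasurableSpace.comap (fun ω => W t ω - W s ω) inferInstance) (natSigma W s) P

/-- The natural filtration of the process `W`, indexed by nonnegative times. -/
def natFiltration (W : ℝ → Ω → ℝ) (hW : ∀ t, Measurable (W t)) :
    Filtration ℝ≥0 mΩ where
  seq t := natSigma W (t : ℝ)
  mono' s t hst := biSup_mono fun u hu => ⟨hu.1, hu.2.trans (NNReal.coe_le_coe.mpr hst)⟩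
  le' t := iSup₂_le fun s _ => measurable_iff_comap_le.mp (hW s)


/-- Under the a.s. multiplicative identity along Brownian motion,
`f (t, W t)` has finite moments of every real order `p`. -/
theorem stmt9 (P : Measure Ω) (W : ℝ → Ω → ℝ) (hBM : IsStandardBM P W)
    (f : ℝ → ℝ → ℝ)
    (hmeas : Measurable (Function.uncurry f))
    (hpos : ∀ u v : ℝ, 0 ≤ u → 0 < f u v)
    (hfe : ∀ s t : ℝ, 0 ≤ s → s ≤ t →
      ∀ᵐ ω ∂P, f s (W s ω) * f (t - s) (W t ω - W s ω) = f t (W t ω)) :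
    ∀ t : ℝ, 0 ≤ t → ∀ p : ℝ, Integrable (fun ω => f t (W t ω) ^ p) P := by
  haveI := hBM.isProb
  intro t ht p
  rcases eq_or_lt_of_le ht with h0 | htpos
  · -- t = 0
    have hfun : (fun ω => f t (W t ω) ^ p) = fun _ => f 0 0 ^ p := by
      funext ω
      rw [← h0, hBM.init ω]
    rw [hfun]
    exact integrable_const _
  · -- t > 0
    have hft : Measurable (f t) := hmeas.comp (measurable_const.prodMk measurable_id)
    have hft2 : Measurable (f (t/2)) := hmeas.comp (measurable_const.prodMk measurable_id)
    set v : ℝ≥0 := Real.toNNReal (t/2) with hvdef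
    have ht2pos : (0:ℝ) < t/2 := by linarith
    have ht2 : (0:ℝ) ≤ t/2 := ht2pos.le
    have hvne : v ≠ 0 := by
      rw [hvdef]
      exact (Real.toNNReal_pos.2 ht2pos).ne'
    -- laws of the two increments
    have law1 : P.map (W (t/2)) = gaussianReal 0 v := by
      have h := hBM.gauss 0 (t/2) le_rfl ht2
      have e : (fun ω => W (t/2) ω - W 0 ω) = W (t/2) := by
        funext ω; rw [hBM.init ω]; ring
      rw [e] at h
      rw [h, hvdef]
      norm_num
    have law2 : P.map (fun ω => W t ω - W (t/2) ω) = gaussianReal 0 v := by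
      have h := hBM.gauss (t/2) t ht2 (by linarith)
      rw [h, hvdef]
      congr 2
      ring
    have hm1 : Measurable (W (t/2)) := hBM.meas _
    have hm2 : Measurable (fun ω => W t ω - W (t/2) ω) := (hBM.meas t).sub (hBM.meas _)
    -- independence of the two increments
    have hindep : IndepFun (W (t/2)) (fun ω => W t ω - W (t/2) ω) P := by
      rw [IndepFun_iff_Indep]
      have hI := hBM.indep (t/2) t ht2 (by linarith)
      rw [Indep_iff] at hI ⊢
      intro t1 t2 h1 h2
      rw [Set.inter_comm, mul_comm]
      have hle : MeasurableSpace.comap (W (t/2)) inferInstance ≤ natSigma W (t/2) :=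
        le_iSup₂ (f := fun (s : ℝ) (_ : s ∈ Set.Icc (0:ℝ) (t/2)) =>
          MeasurableSpace.comap (W s) inferInstance) (t/2) ⟨ht2, le_rfl⟩
      exact hI t2 t1 h2 (hle t1 h1)
    have hjoint : P.map (fun ω => (W (t/2) ω, W t ω - W (t/2) ω))
        = (gaussianReal 0 v).prod (gaussianReal 0 v) := by
      rw [(indepFun_iff_map_prod_eq_prod_map_map hm1.aemeasurable hm2.aemeasurable).1 hindep,
        law1, law2]
    -- the functional equation, under the product gaussian
    have hQmeas : MeasurableSet {z : ℝ × ℝ | f (t/2) z.1 * f (t/2) z.2 = f t (z.1 + z.2)} := by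
      have hf1 : Measurable fun z : ℝ × ℝ => f (t/2) z.1 * f (t/2) z.2 :=
        (hft2.comp measurable_fst).mul (hft2.comp measurable_snd)
      have hf2 : Measurable fun z : ℝ × ℝ => f t (z.1 + z.2) :=
        hft.comp (measurable_fst.add measurable_snd)
      exact measurableSet_eq_fun hf1 hf2
    have haeP : ∀ᵐ ω ∂P, f (t/2) (W (t/2) ω) * f (t/2) (W t ω - W (t/2) ω)
        = f t (W (t/2) ω + (W t ω - W (t/2) ω)) := by
      filter_upwards [hfe (t/2) t ht2 (by linarith)] with ω hω
      rw [show W (t/2) ω + (W t ω - W (t/2) ω) = W t ω by ring]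
      rw [show t - t/2 = t/2 by ring] at hω
      exact hω
    have haeG : ∀ᵐ z : ℝ × ℝ ∂((gaussianReal 0 v).prod (gaussianReal 0 v)),
        f (t/2) z.1 * f (t/2) z.2 = f t (z.1 + z.2) := by
      rw [← hjoint, MeasureTheory.ae_map_iff (hm1.prodMk hm2).aemeasurable hQmeas]
      exact haeP
    -- transfer to Lebesgue
    have hacL : (Measure.prod (volume : Measure ℝ) (volume : Measure ℝ))
        ≪ (gaussianReal 0 v).prod (gaussianReal 0 v) :=
      (gaussianReal_absolutelyContinuous' 0 hvne).prod
        (gaussianReal_absolutelyContinuous' 0 hvne)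
    have haeL : ∀ᵐ z : ℝ × ℝ ∂(Measure.prod (volume : Measure ℝ) (volume : Measure ℝ)),
        f (t/2) z.1 * f (t/2) z.2 = f t (z.1 + z.2) :=
      haeG.filter_mono hacL.ae_le
    -- take logarithms
    have hlog : ∀ᵐ z : ℝ × ℝ ∂(Measure.prod (volume : Measure ℝ) (volume : Measure ℝ)),
        Real.log (f (t/2) z.1) + Real.log (f (t/2) z.2) = Real.log (f t (z.1 + z.2)) := by
      filter_upwards [haeL] with z hz
      rw [← Real.log_mul (ne_of_gt (hpos _ _ ht2)) (ne_of_gt (hpos _ _ ht2)), hz]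
    have hgmeas : Measurable fun x => Real.log (f t x) := Real.measurable_log.comp hft
    obtain ⟨C, hC0, hCb⟩ := Stmt9Aux.linear_growth_of_split (gh := fun x => Real.log (f (t/2) x)) hgmeas hlog
    -- the law of W t
    set vt : ℝ≥0 := Real.toNNReal t with hvt
    have hvtne : vt ≠ 0 := by
      rw [hvt]
      exact (Real.toNNReal_pos.2 htpos).ne'
    have lawt : P.map (W t) = gaussianReal 0 vt := by
      have h := hBM.gauss 0 t le_rfl ht
      have e : (fun ω => W t ω - W 0 ω) = W t := by
        funext ω; rw [hBM.init ω]; ring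
      rw [e] at h
      rw [h, hvt]
      norm_num
    have hCbG : ∀ᵐ x ∂(gaussianReal 0 vt), |Real.log (f t x)| ≤ C * (1 + |x|) :=
      hCb.filter_mono (gaussianReal_absolutelyContinuous 0 hvtne).ae_le
    -- integrability against the gaussian law
    have hrw : (fun x => f t x ^ p) = fun x => rexp (p * Real.log (f t x)) := by
      funext x
      rw [Real.rpow_def_of_pos (hpos t x ht), mul_comm]
    have hint : Integrable (fun x => f t x ^ p) (gaussianReal 0 vt) := by
      rw [hrw]
      refine Integrable.mono'
        (Stmt9Aux.integrable_exp_mul_abs_gaussianReal hvtne (|p| * C)) ?_ ?_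
      · exact (Real.measurable_exp.comp (hgmeas.const_mul p)).aestronglyMeasurable
      · filter_upwards [hCbG] with x hx
        rw [Real.norm_eq_abs, abs_of_pos (Real.exp_pos _)]
        refine Real.exp_le_exp.2 ?_
        calc p * Real.log (f t x) ≤ |p * Real.log (f t x)| := le_abs_self _
        _ = |p| * |Real.log (f t x)| := abs_mul _ _
        _ ≤ |p| * (C * (1 + |x|)) := mul_le_mul_of_nonneg_left hx (abs_nonneg p)
        _ = |p| * C * (1 + |x|) := by ring
    -- back to Ω
    have hgm : AEStronglyMeasurable (fun x => f t x ^ p) (P.map (W t)) := by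
      rw [lawt]
      exact hint.aestronglyMeasurable
    have hfinal := (integrable_map_measure hgm (hBM.meas t).aemeasurable).1
      (by rw [lawt]; exact hint)
    exact hfinal


end
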